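/- Let Λ > 0 and β̂ ∈ ℝ, and let β be the maximal solution of β'' - (1/2)(β')² = -e^{-2β}Λ with β(0) = β̂, β'(0) = √((2/3)e^{-2β̂}(e^{3β̂}+Λ)) > 0. Then β is strictly increasing on its interval of existence. -/

import Mathlib

open Real Set

/-- For `Λ > 0`, the solution of the conformal-factor ODE with Friedmann-compatible
initial data is strictly increasing. -/
theorem conformal_factor_strictMono (Λ βh T : ℝ) (hΛ : 0 < Λ) (β : ℝ → ℝ)
    (hβ : ContDiff ℝ 2 β) (h0 : β 0 = βh)
    (h1 : deriv β 0 = Real.sqrt ((2/3) * Real.exp (-2*βh) * (Real.exp (3*βh) + Λ)))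
    (hode : ∀ t ∈ Ico (0:ℝ) T,
      deriv (deriv β) t - (1/2) * (deriv β t)^2 = -(Real.exp (-2 * β t)) * Λ) :
    StrictMonoOn β (Ico (0:ℝ) T) := by
  have hβ2 : ContDiff ℝ (1 + 1) β := by
    convert hβ using 2
    exact one_add_one_eq_two
  have hβd : ContDiff ℝ 1 (deriv β) := (contDiff_succ_iff_deriv.mp hβ2).2.2
  have hd1 : Differentiable ℝ β := (contDiff_succ_iff_deriv.mp hβ2).1
  have hd2 : Differentiable ℝ (deriv β) := hβd.differentiable one_ne_zero
  have hcd : Continuous (deriv β) := hd2.continuous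
  -- the energy function
  set E : ℝ → ℝ := fun t => (deriv β t) ^ 2 - (2/3) * Real.exp (β t)
      - (2/3) * Λ * Real.exp (-2 * β t) with hE_def
  have hEcont : Continuous E := by
    fun_prop
  have hE0 : E 0 = 0 := by
    have hnn : 0 ≤ (2/3) * Real.exp (-2*βh) * (Real.exp (3*βh) + Λ) := by positivity
    have hsq : (deriv β 0) ^ 2 = (2/3) * Real.exp (-2*βh) * (Real.exp (3*βh) + Λ) := by
      rw [h1, Real.sq_sqrt hnn]
    have hmul : Real.exp (-2*βh) * Real.exp (3*βh) = Real.exp βh := by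
      rw [← Real.exp_add]; ring_nf
    simp only [hE_def, h0, hsq]
    nlinarith [hmul]
  -- derivative of E
  have hEderiv : ∀ t : ℝ, HasDerivAt E
      (2 * deriv β t * deriv (deriv β) t
        - (2/3) * (Real.exp (β t) * deriv β t)
        - (2/3) * Λ * (Real.exp (-2 * β t) * (-2 * deriv β t))) t := by
    intro t
    have h1' : HasDerivAt (fun s => (deriv β s) ^ 2) (2 * deriv β t * deriv (deriv β) t) t := by
      have : HasDerivAt (fun s => (deriv β s) ^ 2) (((2:ℕ):ℝ) * deriv β t ^ (2 - 1) * deriv (deriv β) t) t :=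
        ((hd2 t).hasDerivAt).fun_pow 2
      convert this using 1
      norm_num
    have h2' : HasDerivAt (fun s => (2/3) * Real.exp (β s))
        ((2/3) * (Real.exp (β t) * deriv β t)) t :=
      (((hd1 t).hasDerivAt).exp).const_mul _
    have h3' : HasDerivAt (fun s => (2/3) * Λ * Real.exp (-2 * β s))
        ((2/3) * Λ * (Real.exp (-2 * β t) * (-2 * deriv β t))) t := by
      have hb : HasDerivAt (fun s => -2 * β s) (-2 * deriv β t) t :=
        ((hd1 t).hasDerivAt).const_mul _
      exact (hb.exp).const_mul _
    exact (h1'.sub h2').sub h3'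
  -- on Ico 0 T the derivative equals (deriv β) * E
  have hEode : ∀ t ∈ Ico (0:ℝ) T, HasDerivAt E (deriv β t * E t) t := by
    intro t ht
    have h := hEderiv t
    have hode' := hode t ht
    convert h using 1
    have hdd : deriv (deriv β) t = (1/2) * (deriv β t)^2 - Real.exp (-2 * β t) * Λ := by
      linarith
    rw [hdd, hE_def]
    ring
  -- E vanishes on [0, t] for every t ∈ Ico 0 T
  have hEzero : ∀ t ∈ Ico (0:ℝ) T, ∀ s ∈ Icc (0:ℝ) t, E s = 0 := by
    intro t ht s hs
    obtain ⟨K, hK⟩ := (isCompact_Icc (a := (0:ℝ)) (b := t)).exists_bound_of_continuousOn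
      hcd.continuousOn
    have hsub : Ico (0:ℝ) t ⊆ Ico (0:ℝ) T := Ico_subset_Ico le_rfl (le_of_lt ht.2)
    have hbound : ∀ x ∈ Ico (0:ℝ) t, ‖deriv β x * E x‖ ≤ K * ‖E x‖ + 0 := by
      intro x hx
      rw [norm_mul, add_zero]
      exact mul_le_mul_of_nonneg_right (hK x (Ico_subset_Icc_self hx)) (norm_nonneg _)
    have := norm_le_gronwallBound_of_norm_deriv_right_le (f := E)
      (f' := fun x => deriv β x * E x) (δ := 0) (K := K) (ε := 0) (a := 0) (b := t)
      hEcont.continuousOn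
      (fun x hx => ((hEode x (hsub hx)).hasDerivWithinAt))
      (by simp [hE0]) hbound s hs
    rw [gronwallBound_ε0_δ0] at this
    have := norm_nonneg (E s)
    have habs : ‖E s‖ = 0 := le_antisymm (by linarith) (norm_nonneg _)
    simpa using habs
  -- deriv β is positive on Ico 0 T
  have hne : ∀ t ∈ Ico (0:ℝ) T, ∀ s ∈ Icc (0:ℝ) t, deriv β s ≠ 0 := by
    intro t ht s hs hzero
    have hE := hEzero t ht s hs
    rw [hE_def] at hE
    simp only [hzero] at hE
    nlinarith [Real.exp_pos (β s), Real.exp_pos (-2 * β s), hΛ]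
  have hd0pos : 0 < deriv β 0 := by
    rw [h1]
    apply Real.sqrt_pos.mpr
    positivity
  have hpos : ∀ t ∈ Ico (0:ℝ) T, 0 < deriv β t := by
    intro t ht
    by_contra hle
    push_neg at hle
    have hlt : deriv β t < 0 :=
      lt_of_le_of_ne hle (hne t ht t ⟨ht.1, le_refl t⟩)
    have hmem : (0:ℝ) ∈ Icc (deriv β t) (deriv β 0) := ⟨le_of_lt hlt, le_of_lt hd0pos⟩
    have hIVT := intermediate_value_Icc' ht.1 hcd.continuousOn
    obtain ⟨s, hs, hs0⟩ := hIVT hmem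
    exact hne t ht s hs hs0
  -- conclude
  apply strictMonoOn_of_deriv_pos (convex_Ico 0 T) (hd1.continuous.continuousOn)
  intro x hx
  rw [interior_Ico] at hx
  exact hpos x ⟨le_of_lt hx.1, hx.2⟩
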